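/- Let d ≥ 3 and k ≥ 1. If φ : [-1,1] × [0,∞) → ℝ belongs to P(𝕊^d × ℝ^k), with Gegenbauer expansion φ(x,t) = ∑_n f_n(t) C_n^{(d-1)/2}(x) (f_n ∈ P(ℝ^k), ∑ f_n(0)C_n^{(d-1)/2}(1) < ∞), and φ is differentiable in x with ∂φ/∂x admitting the uniformly convergent expansion ∑_n h_n(t) C_n^{(d+1)/2}(x), then h_{n-1}(t) = (d-1) f_n(t) for all n ≥ 1 and t ≥ 0; consequently D₁φ := ∂φ/∂x belongs to P(𝕊^{d+2} × ℝ^k). -/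

import Mathlib

open MeasureTheory Filter

noncomputable section

/-- Gegenbauer (ultraspherical) polynomial `C_n^lam`, defined via the standard recurrence
equivalent to the generating function `(1 - 2xt + t²)^{-lam} = ∑ C_n^lam(x) t^n`. -/
def gegenbauer (lam : ℝ) : ℕ → ℝ → ℝ
  | 0 => fun _ => 1
  | 1 => fun x => 2 * lam * x
  | (n + 2) => fun x =>
      (2 * x * ((n : ℝ) + 1 + lam) * gegenbauer lam (n + 1) x
        - ((n : ℝ) + 2 * lam) * gegenbauer lam n x) / ((n : ℝ) + 2)

/-- Positive definiteness of a real kernel on a set `X`. -/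
def IsPosDefKernel {X : Type*} (C : X → X → ℝ) : Prop :=
  ∀ (N : ℕ) (x : Fin N → X) (a : Fin N → ℝ),
    0 ≤ ∑ i, ∑ j, a i * C (x i) (x j) * a j

/-- The class `P(ℝ^k)`: continuous `f : [0,∞) → ℝ` whose radial extension
`(x,y) ↦ f (dist x y)` is positive definite on `ℝ^k`. -/
def radPD (k : ℕ) (f : ℝ → ℝ) : Prop :=
  ContinuousOn f (Set.Ici 0) ∧
  IsPosDefKernel (fun x y : EuclideanSpace ℝ (Fin k) => f (dist x y))

/-- The class `P(𝕊^d × ℝ^k)` via the Berg–Porcu characterization: `φ` has a Gegenbauer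
expansion `φ(x,t) = ∑ f_n(t) C_n^{(d-1)/2}(x)` with `f_n ∈ P(ℝ^k)` and
`∑ f_n(0) C_n^{(d-1)/2}(1) < ∞`. -/
def memPSphereRk (d k : ℕ) (φ : ℝ → ℝ → ℝ) : Prop :=
  ∃ f : ℕ → ℝ → ℝ,
    (∀ n, radPD k (f n)) ∧
    Summable (fun n => f n 0 * gegenbauer (((d : ℝ) - 1) / 2) n 1) ∧
    ∀ x ∈ Set.Icc (-1 : ℝ) 1, ∀ t, 0 ≤ t →
      φ x t = ∑' n, f n t * gegenbauer (((d : ℝ) - 1) / 2) n x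

namespace Geg

lemma g0 (lam : ℝ) (x : ℝ) : gegenbauer lam 0 x = 1 := rfl
lemma g1 (lam : ℝ) (x : ℝ) : gegenbauer lam 1 x = 2 * lam * x := rfl

/-- division-free recurrence -/
lemma rec2 (lam : ℝ) (n : ℕ) (x : ℝ) :
    ((n : ℝ) + 2) * gegenbauer lam (n+2) x =
      2 * x * ((n : ℝ) + 1 + lam) * gegenbauer lam (n + 1) x
        - ((n : ℝ) + 2 * lam) * gegenbauer lam n x := by
  have hne : ((n:ℝ)+2) ≠ 0 := by positivity
  show ((n : ℝ) + 2) * ((2 * x * ((n : ℝ) + 1 + lam) * gegenbauer lam (n + 1) x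
        - ((n : ℝ) + 2 * lam) * gegenbauer lam n x) / ((n : ℝ) + 2)) = _
  field_simp

/-- identity (iii'): `2λ(1-x²) C_n^{λ+1} = (n+2λ) C_n^λ - (n+1) x C_{n+1}^λ`. -/
lemma id3 (lam : ℝ) : ∀ n : ℕ, ∀ x : ℝ,
    2*lam*(1-x^2) * gegenbauer (lam+1) n x
      = ((n:ℝ)+2*lam) * gegenbauer lam n x - ((n:ℝ)+1) * x * gegenbauer lam (n+1) x := by
  intro n
  induction n using Nat.strong_induction_on with
  | _ n ih =>
    match n with
    | 0 => intro x; simp [gegenbauer]; ring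
    | 1 => intro x; simp [gegenbauer]; ring
    | (n+2) =>
      intro x
      have h1 := ih (n+1) (by omega) x
      have h0 := ih n (by omega) x
      have hne : ((n:ℝ)+2) ≠ 0 := by positivity
      have A := rec2 (lam+1) n x
      have B := rec2 lam (n+1) x
      have Cr := rec2 lam n x
      push_cast at h1 h0 A B Cr ⊢
      rw [show n+1+1 = n+2 from rfl] at h1 B
      rw [show n+2+1 = (n+1)+2 from rfl]
      have key : ((n:ℝ)+2) * (2*lam*(1-x^2) * gegenbauer (lam+1) (n+2) x)
          = ((n:ℝ)+2) * ((((n:ℝ)+2)+2*lam) * gegenbauer lam (n+2) x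
              - (((n:ℝ)+2)+1) * x * gegenbauer lam (n+1+2) x) := by
        linear_combination 2*lam*(1-x^2)*A + 2*x*((n:ℝ)+2+lam)*h1
          - ((n:ℝ)+2*lam+2)*h0 + ((n:ℝ)+2)*x*B - ((n:ℝ)+2+2*lam)*Cr
      have := mul_left_cancel₀ hne key
      push_cast
      linarith [this]

/-- identity (v): `(n+1+2λ) C_{n+1}^λ = 2λ (C_{n+1}^{λ+1} - x C_n^{λ+1})`. -/
lemma id5 (lam : ℝ) : ∀ n : ℕ, ∀ x : ℝ,
    ((n:ℝ)+1+2*lam) * gegenbauer lam (n+1) x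
      = 2*lam * (gegenbauer (lam+1) (n+1) x - x * gegenbauer (lam+1) n x) := by
  intro n
  induction n using Nat.strong_induction_on with
  | _ n ih =>
    match n with
    | 0 => intro x; simp [gegenbauer]; ring
    | 1 => intro x; simp [gegenbauer]; ring
    | (m+2) =>
      intro x
      have P := ih (m+1) (by omega) x
      have I3 := id3 lam (m+1) x
      have B := rec2 lam (m+1) x
      have A := rec2 (lam+1) (m+1) x
      have hne : ((m:ℝ)+3) ≠ 0 := by positivity
      push_cast at P I3 B A ⊢
      rw [show m+1+1 = m+2 from rfl] at P I3 B A
      rw [show m+2+1 = (m+1)+2 from rfl]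
      have key : ((m:ℝ)+3) * ((((m:ℝ)+2)+1+2*lam) * gegenbauer lam (m+1+2) x)
          = ((m:ℝ)+3) * (2*lam * (gegenbauer (lam+1) (m+1+2) x - x * gegenbauer (lam+1) (m+2) x)) := by
        push_cast
        linear_combination ((m:ℝ)+3+2*lam)*B - 2*lam*A + ((m:ℝ)+3+2*lam)*x*P + ((m:ℝ)+3+2*lam)*I3
      have := mul_left_cancel₀ hne key
      push_cast at this ⊢
      linarith [this]

/-- identity (iv): `(n+2) C_{n+2}^λ = 2λ (x C_{n+1}^{λ+1} - C_n^{λ+1})`. -/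
lemma id4 (lam : ℝ) (n : ℕ) (x : ℝ) :
    ((n:ℝ)+2) * gegenbauer lam (n+2) x
      = 2*lam * (x * gegenbauer (lam+1) (n+1) x - gegenbauer (lam+1) n x) := by
  have R := rec2 lam n x
  have P := id5 lam n x
  have I3 := id3 lam n x
  linear_combination R + x*P + I3

/-- identity (ii): `(n+2+λ) C_{n+2}^λ = λ (C_{n+2}^{λ+1} - C_n^{λ+1})`. -/
lemma id2 (lam : ℝ) (n : ℕ) (x : ℝ) :
    ((n:ℝ)+2+lam) * gegenbauer lam (n+2) x
      = lam * (gegenbauer (lam+1) (n+2) x - gegenbauer (lam+1) n x) := by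
  have A := id4 lam n x
  have B := id5 lam (n+1) x
  push_cast at B
  rw [show n+1+1 = n+2 from rfl] at B
  linear_combination (A + B) / 2

lemma gdef (lam : ℝ) (n : ℕ) (x : ℝ) :
    gegenbauer lam (n+2) x =
      (2 * x * ((n : ℝ) + 1 + lam) * gegenbauer lam (n + 1) x
        - ((n : ℝ) + 2 * lam) * gegenbauer lam n x) / ((n : ℝ) + 2) := rfl

/-- derivative of gegenbauer, as a function value. -/
def gegDeriv (lam : ℝ) : ℕ → ℝ → ℝ
  | 0 => fun _ => 0
  | (n+1) => fun x => 2 * lam * gegenbauer (lam+1) n x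

lemma hasDerivAt_geg (lam : ℝ) : ∀ n : ℕ, ∀ x : ℝ,
    HasDerivAt (fun y => gegenbauer lam n y) (gegDeriv lam n x) x := by
  intro n
  induction n using Nat.strong_induction_on with
  | _ n ih =>
    match n with
    | 0 => intro x; simpa [gegenbauer, gegDeriv] using hasDerivAt_const x (1:ℝ)
    | 1 =>
      intro x
      have : (fun y => gegenbauer lam 1 y) = fun y => 2*lam*y := by
        funext y; simp [gegenbauer]
      rw [this]
      simpa [gegDeriv, gegenbauer] using (hasDerivAt_id x).const_mul (2*lam)
    | (n+2) =>
      intro x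
      have IH1 := ih (n+1) (by omega) x
      have IH0 := ih n (by omega) x
      have hne : ((n:ℝ)+2) ≠ 0 := by positivity
      have hfun : (fun y => gegenbauer lam (n+2) y)
          = fun y => (2 * y * ((n : ℝ) + 1 + lam) * gegenbauer lam (n + 1) y
            - ((n : ℝ) + 2 * lam) * gegenbauer lam n y) / ((n : ℝ) + 2) := by
        funext y; rw [gdef]
      rw [hfun]
      have hd : HasDerivAt (fun y => (2 * y * ((n : ℝ) + 1 + lam) * gegenbauer lam (n + 1) y
            - ((n : ℝ) + 2 * lam) * gegenbauer lam n y) / ((n : ℝ) + 2))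
          ((2 * ((n : ℝ) + 1 + lam) * gegenbauer lam (n+1) x
            + 2 * x * ((n : ℝ) + 1 + lam) * gegDeriv lam (n+1) x
            - ((n : ℝ) + 2 * lam) * gegDeriv lam n x) / ((n : ℝ) + 2)) x := by
        apply HasDerivAt.div_const
        apply HasDerivAt.sub
        · have h1 : HasDerivAt (fun y : ℝ => 2 * y * ((n : ℝ) + 1 + lam))
              (2 * ((n : ℝ) + 1 + lam)) x := by
            simpa using ((hasDerivAt_id x).const_mul (2:ℝ)).mul_const ((n : ℝ) + 1 + lam)
          exact h1.mul IH1
        · exact IH0.const_mul _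
      convert hd using 1
      -- value equality
      match n with
      | 0 =>
        simp [gegDeriv, gegenbauer]
        field_simp
        ring
      | (m+1) =>
        show 2*lam * gegenbauer (lam+1) (m+2) x = _
        simp only [gegDeriv]
        have I2 := id2 lam m x
        have A := rec2 (lam+1) m x
        push_cast
        rw [show m+1+1 = m+2 from rfl]
        rw [eq_div_iff (by positivity : ((m:ℝ)+1+2) ≠ 0)]
        linear_combination 2*lam*A - 2*I2

lemma geg_parity (lam : ℝ) : ∀ n : ℕ, ∀ x : ℝ,
    gegenbauer lam n (-x) = (-1:ℝ)^n * gegenbauer lam n x := by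
  intro n
  induction n using Nat.strong_induction_on with
  | _ n ih =>
    match n with
    | 0 => intro x; simp [gegenbauer]
    | 1 => intro x; simp [gegenbauer]
    | (n+2) =>
      intro x
      have h1 := ih (n+1) (by omega) x
      have h0 := ih n (by omega) x
      rw [gdef, gdef, h1, h0]
      ring

/-- positivity and monotonicity at `x = 1` for `λ > 0`. -/
lemma geg_one_pos (lam : ℝ) (hl : (1:ℝ)/2 ≤ lam) : ∀ n : ℕ,
    0 < gegenbauer lam n 1 ∧ gegenbauer lam n 1 ≤ gegenbauer lam (n+1) 1 := by
  intro n
  induction n using Nat.strong_induction_on with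
  | _ n ih =>
    match n with
    | 0 =>
      constructor
      · simp [gegenbauer]
      · simp [gegenbauer]; nlinarith
    | (n+1) =>
      obtain ⟨hpos, hmono⟩ := ih n (by omega)
      have hpos1 : 0 < gegenbauer lam (n+1) 1 := lt_of_lt_of_le hpos hmono
      constructor
      · exact hpos1
      · have R := rec2 lam n 1
        have hge : gegenbauer lam (n+1) 1 ≤ gegenbauer lam (n+2) 1 := by
          have hne : (0:ℝ) < (n:ℝ)+2 := by positivity
          rw [show (2:ℝ) * 1 * ((n : ℝ) + 1 + lam) = 2*((n : ℝ) + 1 + lam) from by ring] at R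
          nlinarith [R, hmono, hpos]
        exact hge

def gegDeriv2 (lam : ℝ) : ℕ → ℝ → ℝ
  | 0 => fun _ => 0
  | (n+1) => fun x => 2 * lam * gegDeriv (lam+1) n x

lemma hasDerivAt_gegDeriv (lam : ℝ) (n : ℕ) (x : ℝ) :
    HasDerivAt (fun y => gegDeriv lam n y) (gegDeriv2 lam n x) x := by
  match n with
  | 0 => simpa [gegDeriv, gegDeriv2] using hasDerivAt_const x (0:ℝ)
  | (n+1) =>
    have := (hasDerivAt_geg (lam+1) n x).const_mul (2*lam)
    simpa [gegDeriv, gegDeriv2, mul_assoc] using this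

/-- the Gegenbauer ODE. -/
lemma geg_ode (lam : ℝ) (n : ℕ) (x : ℝ) :
    (1 - x^2) * gegDeriv2 lam n x - (2*lam+1) * x * gegDeriv lam n x
      + (n:ℝ) * ((n:ℝ) + 2*lam) * gegenbauer lam n x = 0 := by
  match n with
  | 0 => simp [gegDeriv, gegDeriv2]
  | 1 => simp [gegDeriv, gegDeriv2, gegenbauer]; ring
  | (n+2) =>
    have I3 := id3 (lam+1) n x
    have I4 := id4 lam n x
    simp only [gegDeriv2, gegDeriv]
    push_cast
    linear_combination 2*lam*I3 + ((n:ℝ)+2+2*lam)*I4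

/-- uniform bound on `[-1,1]` for `λ ≥ 1/2`. -/
lemma geg_abs_le (lam : ℝ) (hl : (1:ℝ)/2 ≤ lam) (n : ℕ) {x : ℝ}
    (hx : x ∈ Set.Icc (-1:ℝ) 1) : |gegenbauer lam n x| ≤ gegenbauer lam n 1 := by
  have hl0 : 0 < lam := by linarith
  match n with
  | 0 => simp [gegenbauer]
  | (m+1) =>
    set n := m + 1 with hn
    have hK : (0:ℝ) < (n:ℝ) * ((n:ℝ) + 2*lam) := by
      have : (1:ℝ) ≤ (n:ℝ) := by exact_mod_cast Nat.one_le_iff_ne_zero.mpr (by omega)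
      nlinarith
    set K : ℝ := (n:ℝ) * ((n:ℝ) + 2*lam) with hKdef
    set E : ℝ → ℝ := fun y => (gegenbauer lam n y)^2 + (1 - y^2) * (gegDeriv lam n y)^2 / K
      with hE
    have hEderiv : ∀ y : ℝ, HasDerivAt E (4*lam*y*(gegDeriv lam n y)^2 / K) y := by
      intro y
      have h1 := hasDerivAt_geg lam n y
      have h2 := hasDerivAt_gegDeriv lam n y
      have hd : HasDerivAt E
          (2 * gegenbauer lam n y * gegDeriv lam n y
            + ((-(2*y)) * (gegDeriv lam n y)^2
              + (1 - y^2) * (2 * gegDeriv lam n y * gegDeriv2 lam n y)) / K) y := by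
        apply HasDerivAt.add
        · exact (h1.pow 2).congr_deriv (by norm_num)
        · apply HasDerivAt.div_const
          have ha : HasDerivAt (fun y : ℝ => 1 - y^2) (-(2*y)) y := by
            simpa using ((hasDerivAt_pow 2 y).const_sub 1)
          have hb : HasDerivAt (fun y => (gegDeriv lam n y)^2)
              (2 * gegDeriv lam n y * gegDeriv2 lam n y) y := by
            have := h2.pow 2
            refine this.congr_deriv ?_
            norm_num
          exact ha.mul hb
      convert hd using 1
      have ode := geg_ode lam n y
      field_simp
      linear_combination (-2 * gegDeriv lam n y) * ode
    have hEcont : Continuous E := by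
      have : Differentiable ℝ E := fun y => (hEderiv y).differentiableAt
      exact this.continuous
    have hderivE : ∀ y, deriv E y = 4*lam*y*(gegDeriv lam n y)^2 / K := fun y =>
      (hEderiv y).deriv
    have hmono : MonotoneOn E (Set.Icc (0:ℝ) 1) := by
      apply monotoneOn_of_deriv_nonneg (convex_Icc 0 1) hEcont.continuousOn
      · intro y _; exact (hEderiv y).differentiableAt.differentiableWithinAt
      · intro y hy
        rw [interior_Icc] at hy
        rw [hderivE]
        have : (0:ℝ) ≤ 4*lam*y := by nlinarith [hy.1]
        positivity
    have hanti : AntitoneOn E (Set.Icc (-1:ℝ) 0) := by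
      apply antitoneOn_of_deriv_nonpos (convex_Icc (-1) 0) hEcont.continuousOn
      · intro y _; exact (hEderiv y).differentiableAt.differentiableWithinAt
      · intro y hy
        rw [interior_Icc] at hy
        rw [hderivE]
        apply div_nonpos_of_nonpos_of_nonneg _ hK.le
        have h4 : 4*lam*y ≤ 0 := by nlinarith [hy.2]
        nlinarith [sq_nonneg (gegDeriv lam n y)]
    have hE1 : E 1 = (gegenbauer lam n 1)^2 := by simp [hE]
    have hEm1 : E (-1) = (gegenbauer lam n 1)^2 := by
      simp only [hE]
      rw [geg_parity, mul_pow, ← pow_mul, mul_comm n 2, pow_mul]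
      norm_num
    have hsq : (gegenbauer lam n x)^2 ≤ (gegenbauer lam n 1)^2 := by
      have hEx : (gegenbauer lam n x)^2 ≤ E x := by
        have h1 : 0 ≤ (1 - x^2) * (gegDeriv lam n x)^2 / K := by
          apply div_nonneg _ hK.le
          apply mul_nonneg _ (sq_nonneg _)
          nlinarith [hx.1, hx.2]
        simp only [hE]; linarith
      rcases le_or_gt 0 x with hx0 | hx0
      · calc (gegenbauer lam n x)^2 ≤ E x := hEx
          _ ≤ E 1 := hmono ⟨hx0, hx.2⟩ ⟨zero_le_one, le_refl 1⟩ hx.2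
          _ = _ := hE1
      · calc (gegenbauer lam n x)^2 ≤ E x := hEx
          _ ≤ E (-1) := hanti ⟨le_refl (-1), by linarith⟩ ⟨hx.1, hx0.le⟩ hx.1
          _ = _ := hEm1
    have hpos := (geg_one_pos lam hl n).1
    nlinarith [abs_nonneg (gegenbauer lam n x), sq_abs (gegenbauer lam n x)]

lemma cont_geg (lam : ℝ) (n : ℕ) : Continuous (fun x => gegenbauer lam n x) :=
  Differentiable.continuous (fun x => (hasDerivAt_geg lam n x).differentiableAt)

lemma cont_gegDeriv (lam : ℝ) (n : ℕ) : Continuous (fun x => gegDeriv lam n x) :=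
  Differentiable.continuous (fun x => (hasDerivAt_gegDeriv lam n x).differentiableAt)

open Real in
/-- derivative of the Wronskian-type function. -/
lemma wronskian_deriv (lam : ℝ) (e : ℕ) (he : (e:ℝ) = 2*lam) (n m : ℕ) (θ : ℝ) :
    HasDerivAt (fun θ => (Real.sin θ)^(e+1) *
      (gegenbauer lam n (Real.cos θ) * gegDeriv lam m (Real.cos θ)
        - gegDeriv lam n (Real.cos θ) * gegenbauer lam m (Real.cos θ)))
      (((m:ℝ)*((m:ℝ)+2*lam) - (n:ℝ)*((n:ℝ)+2*lam)) * (Real.sin θ)^e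
        * gegenbauer lam n (Real.cos θ) * gegenbauer lam m (Real.cos θ)) θ := by
  have hc := Real.hasDerivAt_cos θ
  have hs : HasDerivAt (fun θ => (Real.sin θ)^(e+1))
      (((e:ℝ)+1)*(Real.sin θ)^e * Real.cos θ) θ := by
    have := (Real.hasDerivAt_sin θ).pow (e+1)
    refine this.congr_deriv ?_
    simp only [Nat.add_sub_cancel, Nat.cast_add, Nat.cast_one]
  have hgn : HasDerivAt (fun θ => gegenbauer lam n (Real.cos θ))
      (gegDeriv lam n (Real.cos θ) * (-Real.sin θ)) θ :=
    (hasDerivAt_geg lam n (Real.cos θ)).comp θ hc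
  have hgm : HasDerivAt (fun θ => gegenbauer lam m (Real.cos θ))
      (gegDeriv lam m (Real.cos θ) * (-Real.sin θ)) θ :=
    (hasDerivAt_geg lam m (Real.cos θ)).comp θ hc
  have hGn : HasDerivAt (fun θ => gegDeriv lam n (Real.cos θ))
      (gegDeriv2 lam n (Real.cos θ) * (-Real.sin θ)) θ :=
    (hasDerivAt_gegDeriv lam n (Real.cos θ)).comp θ hc
  have hGm : HasDerivAt (fun θ => gegDeriv lam m (Real.cos θ))
      (gegDeriv2 lam m (Real.cos θ) * (-Real.sin θ)) θ :=
    (hasDerivAt_gegDeriv lam m (Real.cos θ)).comp θ hc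
  have hprod := hs.mul ((hgn.mul hGm).sub (hGn.mul hgm))
  refine hprod.congr_deriv ?_
  refine Eq.symm ?_
  simp only [Pi.mul_apply, Pi.sub_apply]
  have oden := geg_ode lam n (Real.cos θ)
  have odem := geg_ode lam m (Real.cos θ)
  have hs2 : (Real.sin θ)^2 = 1 - (Real.cos θ)^2 := by
    have := Real.sin_sq_add_cos_sq θ; linarith
  set s := Real.sin θ
  set c := Real.cos θ
  set gn := gegenbauer lam n c
  set gm := gegenbauer lam m c
  set Gn := gegDeriv lam n c
  set Gm := gegDeriv lam m c
  set G2n := gegDeriv2 lam n c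
  set G2m := gegDeriv2 lam m c
  have hpow2 : s^(e+1) * s = s^e * s^2 := by ring
  linear_combination (-(s^e * gm)) * oden + (s^e * gn) * odem
    + s^e * (gn*G2m - G2n*gm) * hs2 + c * s^e * (Gn*gm - gn*Gm) * he

open Real intervalIntegral in
/-- orthogonality -/
lemma geg_orth (lam : ℝ) (e : ℕ) (he : (e:ℝ) = 2*lam) {n m : ℕ} (hnm : n ≠ m) :
    ∫ θ in (0:ℝ)..π, gegenbauer lam n (Real.cos θ) * gegenbauer lam m (Real.cos θ)
      * (Real.sin θ)^e = 0 := by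
  have hW := wronskian_deriv lam e he n m
  have c1 : Continuous fun θ => gegenbauer lam n (Real.cos θ) :=
    (cont_geg lam n).comp Real.continuous_cos
  have c2 : Continuous fun θ => gegenbauer lam m (Real.cos θ) :=
    (cont_geg lam m).comp Real.continuous_cos
  have hint : IntervalIntegrable (fun θ => ((m:ℝ)*((m:ℝ)+2*lam) - (n:ℝ)*((n:ℝ)+2*lam))
      * (Real.sin θ)^e * gegenbauer lam n (Real.cos θ) * gegenbauer lam m (Real.cos θ))
      MeasureTheory.volume 0 π := by
    apply Continuous.intervalIntegrable
    exact ((continuous_const.mul (Real.continuous_sin.pow e)).mul c1).mul c2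
  have key := intervalIntegral.integral_eq_sub_of_hasDerivAt (fun θ _ => hW θ) hint
  rw [Real.sin_pi, Real.sin_zero, zero_pow (by omega : e + 1 ≠ 0)] at key
  simp only [zero_mul, sub_zero] at key
  have hfactor : (∫ θ in (0:ℝ)..π, ((m:ℝ)*((m:ℝ)+2*lam) - (n:ℝ)*((n:ℝ)+2*lam))
      * (Real.sin θ)^e * gegenbauer lam n (Real.cos θ) * gegenbauer lam m (Real.cos θ))
      = ((m:ℝ)*((m:ℝ)+2*lam) - (n:ℝ)*((n:ℝ)+2*lam)) * ∫ θ in (0:ℝ)..π,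
        gegenbauer lam n (Real.cos θ) * gegenbauer lam m (Real.cos θ) * (Real.sin θ)^e := by
    rw [← intervalIntegral.integral_const_mul]
    apply intervalIntegral.integral_congr
    intro θ _; ring
  rw [hfactor] at key
  have hco : ((m:ℝ)*((m:ℝ)+2*lam) - (n:ℝ)*((n:ℝ)+2*lam)) ≠ 0 := by
    have heq : ((m:ℝ)*((m:ℝ)+2*lam) - (n:ℝ)*((n:ℝ)+2*lam))
        = ((m:ℝ) - (n:ℝ)) * ((m:ℝ) + (n:ℝ) + (e:ℝ)) := by rw [he]; ring
    rw [heq]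
    apply mul_ne_zero
    · have : (m:ℝ) ≠ (n:ℝ) := by exact_mod_cast (Ne.symm hnm)
      exact sub_ne_zero.mpr this
    · rcases Nat.eq_zero_or_pos (m + n + e) with hz | hp
      · exact absurd (by omega : n = m) hnm
      · have : (0:ℝ) < ((m+n+e : ℕ):ℝ) := by exact_mod_cast hp
        push_cast at this
        linarith
  rcases mul_eq_zero.mp key with hbad | hok
  · exact absurd hbad hco
  · exact hok

open Real in
lemma geg_norm_pos (lam : ℝ) (hl : (1:ℝ)/2 ≤ lam) (e : ℕ) (m : ℕ) :
    0 < ∫ θ in (0:ℝ)..π, gegenbauer lam m (Real.cos θ) * gegenbauer lam m (Real.cos θ)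
      * (Real.sin θ)^e := by
  set φ : ℝ → ℝ := fun θ => gegenbauer lam m (Real.cos θ) * gegenbauer lam m (Real.cos θ)
      * (Real.sin θ)^e with hφ
  have hφc : Continuous φ := by
    have c1 : Continuous fun θ => gegenbauer lam m (Real.cos θ) :=
      (cont_geg lam m).comp Real.continuous_cos
    exact (c1.mul c1).mul (Real.continuous_sin.pow e)
  have hφnn : ∀ θ ∈ Set.Icc (0:ℝ) π, 0 ≤ φ θ := by
    intro θ hθ
    have hs : 0 ≤ Real.sin θ := Real.sin_nonneg_of_nonneg_of_le_pi hθ.1 hθ.2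
    have : 0 ≤ gegenbauer lam m (Real.cos θ) * gegenbauer lam m (Real.cos θ) := mul_self_nonneg _
    positivity
  -- find a point with positive integrand
  have hg1 : 0 < gegenbauer lam m 1 := (geg_one_pos lam hl m).1
  have hcont1 : ContinuousAt (fun x => gegenbauer lam m x) 1 := (cont_geg lam m).continuousAt
  rw [Metric.continuousAt_iff] at hcont1
  obtain ⟨δ, hδ, hδp⟩ := hcont1 (gegenbauer lam m 1) hg1
  set x1 : ℝ := max (1 - δ/2) 0 with hx1
  have hx1lt : x1 < 1 := by
    apply max_lt _ one_pos
    linarith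
  have hx1gt : (-1:ℝ) < x1 := lt_of_lt_of_le (by norm_num) (le_max_right _ _)
  have hgx1 : 0 < gegenbauer lam m x1 := by
    have hx1ge : 1 - δ/2 ≤ x1 := le_max_left _ _
    have hd : dist x1 1 < δ := by
      rw [Real.dist_eq, abs_lt]
      constructor <;> linarith
    have := hδp hd
    rw [Real.dist_eq, abs_lt] at this
    linarith [this.1]
  set θ0 : ℝ := Real.arccos x1 with hθ0
  have hθ0pos : 0 < θ0 := Real.arccos_pos.mpr hx1lt
  have hcosθ0 : Real.cos θ0 = x1 := Real.cos_arccos hx1gt.le hx1lt.le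
  have hθ0pi : θ0 < π := by
    refine lt_of_le_of_ne (Real.arccos_le_pi x1) (fun hpe => ?_)
    rw [hpe, Real.cos_pi] at hcosθ0
    linarith
  have hsθ0 : 0 < Real.sin θ0 := Real.sin_pos_of_pos_of_lt_pi hθ0pos hθ0pi
  have hφθ0 : 0 < φ θ0 := by
    simp only [hφ, hcosθ0]
    positivity
  -- find a positive neighbourhood
  have hc0 : ContinuousAt φ θ0 := hφc.continuousAt
  rw [Metric.continuousAt_iff] at hc0
  obtain ⟨ε, hε, hεp⟩ := hc0 (φ θ0) hφθ0
  set a : ℝ := max (θ0 - ε/2) 0 with ha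
  set b : ℝ := min (θ0 + ε/2) π with hb
  have hab0 : a < θ0 := max_lt (by linarith) hθ0pos
  have hab1 : θ0 < b := lt_min (by linarith) hθ0pi
  have hanneg : 0 ≤ a := le_max_right _ _
  have hbpi : b ≤ π := min_le_right _ _
  have hposon : ∀ θ ∈ Set.Ioo a b, 0 < φ θ := by
    intro θ hθ
    have h1 : θ0 - ε/2 ≤ a := le_max_left _ _
    have h2 : b ≤ θ0 + ε/2 := min_le_left _ _
    have hd : dist θ θ0 < ε := by
      rw [Real.dist_eq, abs_lt]
      constructor <;> [linarith [hθ.1]; linarith [hθ.2]]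
    have := hεp hd
    rw [Real.dist_eq, abs_lt] at this
    linarith [this.1]
  have hint : ∀ u v : ℝ, IntervalIntegrable φ MeasureTheory.volume u v :=
    fun u v => hφc.intervalIntegrable u v
  have hmid : 0 < ∫ θ in a..b, φ θ :=
    intervalIntegral.intervalIntegral_pos_of_pos_on (hint a b) hposon (lt_trans hab0 hab1)
  have hapi : a ≤ π := le_of_lt (lt_trans hab0 hθ0pi)
  have hb0 : 0 ≤ b := le_of_lt (lt_trans hθ0pos hab1)
  have h1 : (∫ θ in (0:ℝ)..b, φ θ) = (∫ θ in (0:ℝ)..a, φ θ) + ∫ θ in a..b, φ θ :=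
    (intervalIntegral.integral_add_adjacent_intervals (hint 0 a) (hint a b)).symm
  have h2 : (∫ θ in (0:ℝ)..π, φ θ) = (∫ θ in (0:ℝ)..b, φ θ) + ∫ θ in b..π, φ θ :=
    (intervalIntegral.integral_add_adjacent_intervals (hint 0 b) (hint b π)).symm
  have hleft : 0 ≤ ∫ θ in (0:ℝ)..a, φ θ := by
    apply intervalIntegral.integral_nonneg hanneg
    intro u hu; exact hφnn u ⟨hu.1, le_trans hu.2 hapi⟩
  have hright : 0 ≤ ∫ θ in b..π, φ θ := by
    apply intervalIntegral.integral_nonneg hbpi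
    intro u hu; exact hφnn u ⟨le_trans hb0 hu.1, hu.2⟩
  rw [h2, h1]
  linarith

open Real in
/-- interchange of sum and integral -/
lemma swap_tsum_integral (ν : ℝ) (c : ℕ → ℝ) (Mc : ℕ → ℝ) (hMc : Summable Mc)
    (hb : ∀ (n : ℕ), ∀ x ∈ Set.Icc (-1:ℝ) 1, |c n * gegenbauer ν n x| ≤ Mc n)
    (W : ℝ → ℝ) (hW : Continuous W) :
    ∫ θ in (0:ℝ)..π, (∑' n, c n * gegenbauer ν n (Real.cos θ)) * W θ
      = ∑' n, c n * ∫ θ in (0:ℝ)..π, gegenbauer ν n (Real.cos θ) * W θ := by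
  obtain ⟨CW, hCW⟩ : ∃ CW, ∀ θ ∈ Set.Icc (0:ℝ) π, ‖W θ‖ ≤ CW :=
    (isCompact_Icc).exists_bound_of_continuousOn hW.continuousOn
  have hCW0 : 0 ≤ CW := le_trans (norm_nonneg _) (hCW 0 ⟨le_refl 0, Real.pi_pos.le⟩)
  have hcos : ∀ θ : ℝ, Real.cos θ ∈ Set.Icc (-1:ℝ) 1 :=
    fun θ => ⟨Real.neg_one_le_cos θ, Real.cos_le_one θ⟩
  have hsumpt : ∀ θ : ℝ, Summable (fun n => c n * gegenbauer ν n (Real.cos θ)) := by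
    intro θ
    apply Summable.of_abs
    exact Summable.of_nonneg_of_le (fun n => abs_nonneg _)
      (fun n => hb n _ (hcos θ)) hMc
  have key : HasSum (fun n : ℕ => ∫ θ in (0:ℝ)..π, c n * (gegenbauer ν n (Real.cos θ) * W θ))
      (∫ θ in (0:ℝ)..π, (∑' n, c n * gegenbauer ν n (Real.cos θ)) * W θ) := by
    apply intervalIntegral.hasSum_integral_of_dominated_convergence
      (bound := fun n _ => Mc n * CW)
    · intro n
      apply Continuous.aestronglyMeasurable
      exact continuous_const.mul (((cont_geg ν n).comp Real.continuous_cos).mul hW)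
    · intro n
      filter_upwards with θ hθ
      rw [Set.uIoc_of_le Real.pi_pos.le] at hθ
      have h1 : |c n * gegenbauer ν n (Real.cos θ)| ≤ Mc n := hb n _ (hcos θ)
      have h2 : ‖W θ‖ ≤ CW := hCW θ ⟨hθ.1.le, hθ.2⟩
      calc ‖c n * (gegenbauer ν n (Real.cos θ) * W θ)‖
          = |c n * gegenbauer ν n (Real.cos θ)| * ‖W θ‖ := by
            rw [Real.norm_eq_abs, Real.norm_eq_abs, ← abs_mul]; ring_nf
        _ ≤ Mc n * CW := by
            apply mul_le_mul h1 h2 (norm_nonneg _) (le_trans (abs_nonneg _) h1)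
    · filter_upwards with θ _
      exact hMc.mul_right CW
    · exact intervalIntegrable_const
    · filter_upwards with θ _
      have := (hsumpt θ).hasSum.mul_right (W θ)
      simpa only [mul_assoc] using this
  have heach : ∀ n : ℕ, (∫ θ in (0:ℝ)..π, c n * (gegenbauer ν n (Real.cos θ) * W θ))
      = c n * ∫ θ in (0:ℝ)..π, gegenbauer ν n (Real.cos θ) * W θ :=
    fun n => intervalIntegral.integral_const_mul _ _
  rw [← key.tsum_eq]
  exact tsum_congr heach

lemma radPD.f0_nonneg {k : ℕ} {f : ℝ → ℝ} (hf : radPD k f) : 0 ≤ f 0 := by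
  have := hf.2 1 (fun _ => 0) (fun _ => 1)
  simpa using this

lemma radPD.abs_le {k : ℕ} {f : ℝ → ℝ} (hf : radPD k f) (hk : 1 ≤ k) {t : ℝ} (ht : 0 ≤ t) :
    |f t| ≤ f 0 := by
  have hi : (0 : ℕ) < k := hk
  set i0 : Fin k := ⟨0, hi⟩
  set xt : EuclideanSpace ℝ (Fin k) := t • (EuclideanSpace.single i0 (1:ℝ)) with hxt
  have hdist : dist (0 : EuclideanSpace ℝ (Fin k)) xt = t := by
    rw [dist_eq_norm, zero_sub, norm_neg, hxt, norm_smul, EuclideanSpace.norm_single]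
    simp [abs_of_nonneg ht]
  have hdist' : dist xt (0 : EuclideanSpace ℝ (Fin k)) = t := by
    rw [dist_comm]; exact hdist
  have hn : ‖xt‖ = t := by
    rw [hxt, norm_smul, EuclideanSpace.norm_single]
    simp [abs_of_nonneg ht]
  have key : ∀ ε : ℝ, ε = 1 ∨ ε = -1 →
      0 ≤ f 0 + ε * f t := by
    intro ε hε
    have h2 := hf.2 2 ![0, xt] ![1, ε]
    simp [Fin.sum_univ_two, hdist, hdist', hn, dist_self] at h2
    rcases hε with h | h <;> subst h <;> linarith
  have h1 := key 1 (Or.inl rfl)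
  have h2 := key (-1) (Or.inr rfl)
  rw [_root_.abs_le]
  constructor <;> nlinarith

end Geg

open Real Geg

theorem descente_D1 (d k : ℕ) (hd : 3 ≤ d) (hk : 1 ≤ k) (f h : ℕ → ℝ → ℝ)
    (hpd : ∀ n, radPD k (f n))
    (hsum : Summable fun n => f n 0 * gegenbauer (((d : ℝ) - 1) / 2) n 1)
    (hderiv : ∀ x ∈ Set.Icc (-1 : ℝ) 1, ∀ t, 0 ≤ t →
      HasDerivAt (fun y => ∑' n, f n t * gegenbauer (((d : ℝ) - 1) / 2) n y)
        (∑' n, h n t * gegenbauer (((d : ℝ) + 1) / 2) n x) x)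
    (hsumh : ∀ t, 0 ≤ t →
      Summable fun n => |h n t| * |gegenbauer (((d : ℝ) + 1) / 2) n 1|) :
    (∀ n, 1 ≤ n → ∀ t, 0 ≤ t → h (n - 1) t = ((d : ℝ) - 1) * f n t) ∧
    memPSphereRk (d + 2) k (fun x t =>
      deriv (fun y => ∑' n, f n t * gegenbauer (((d : ℝ) - 1) / 2) n y) x) := by
  have hd3 : (3:ℝ) ≤ (d:ℝ) := by exact_mod_cast hd
  set lam : ℝ := ((d:ℝ)-1)/2 with hlam
  have hmu : ((d:ℝ)+1)/2 = lam + 1 := by rw [hlam]; ring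
  have hlam_half : (1:ℝ)/2 ≤ lam := by rw [hlam]; linarith
  have hmu_half : (1:ℝ)/2 ≤ lam + 1 := by linarith
  have he : ((d+1 : ℕ):ℝ) = 2*(lam+1) := by push_cast; rw [hlam]; ring
  simp only [hmu] at hderiv hsumh
  have hcos : ∀ θ : ℝ, Real.cos θ ∈ Set.Icc (-1:ℝ) 1 :=
    fun θ => ⟨Real.neg_one_le_cos θ, Real.cos_le_one θ⟩
  have hdne : d ≠ 0 := by omega
  -- the key coefficient identity
  have key1 : ∀ (m : ℕ) (t : ℝ), 0 ≤ t → h m t = ((d:ℝ)-1) * f (m+1) t := by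
    intro m t ht
    have hf0 : ∀ n, 0 ≤ f n 0 := fun n => radPD.f0_nonneg (hpd n)
    have hfb : ∀ n, |f n t| ≤ f n 0 := fun n => radPD.abs_le (hpd n) hk ht
    have hbf : ∀ (n : ℕ), ∀ x ∈ Set.Icc (-1:ℝ) 1,
        |f n t * gegenbauer lam n x| ≤ f n 0 * gegenbauer lam n 1 := by
      intro n x hx
      rw [abs_mul]
      exact mul_le_mul (hfb n) (geg_abs_le lam hlam_half n hx) (abs_nonneg _) (hf0 n)
    have hMh : Summable (fun n => |h n t| * |gegenbauer (lam+1) n 1|) := hsumh t ht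
    have hbh : ∀ (n : ℕ), ∀ x ∈ Set.Icc (-1:ℝ) 1,
        |h n t * gegenbauer (lam+1) n x| ≤ |h n t| * |gegenbauer (lam+1) n 1| := by
      intro n x hx
      rw [abs_mul]
      apply mul_le_mul_of_nonneg_left _ (abs_nonneg _)
      calc |gegenbauer (lam+1) n x| ≤ gegenbauer (lam+1) n 1 := geg_abs_le _ hmu_half n hx
        _ ≤ |gegenbauer (lam+1) n 1| := le_abs_self _
    set g : ℝ → ℝ := fun x => ∑' n, f n t * gegenbauer lam n x with hgdef
    set H : ℝ → ℝ := fun x => ∑' n, h n t * gegenbauer (lam+1) n x with hHdef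
    have hgderiv : ∀ x ∈ Set.Icc (-1:ℝ) 1, HasDerivAt g (H x) x := fun x hx => hderiv x hx t ht
    -- continuity
    have hHcont : ContinuousOn H (Set.Icc (-1:ℝ) 1) := by
      apply continuousOn_tsum (u := fun n => |h n t| * |gegenbauer (lam+1) n 1|)
        (fun n => (continuous_const.mul (cont_geg (lam+1) n)).continuousOn) hMh
      intro n x hx
      rw [Real.norm_eq_abs]
      exact hbh n x hx
    have hgcont : ContinuousOn g (Set.Icc (-1:ℝ) 1) := by
      apply continuousOn_tsum (u := fun n => f n 0 * gegenbauer lam n 1)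
        (fun n => (continuous_const.mul (cont_geg lam n)).continuousOn) hsum
      intro n x hx
      rw [Real.norm_eq_abs]
      exact hbf n x hx
    have hHcosc : Continuous (fun θ => H (Real.cos θ)) :=
      hHcont.comp_continuous Real.continuous_cos hcos
    have hgcosc : Continuous (fun θ => g (Real.cos θ)) :=
      hgcont.comp_continuous Real.continuous_cos hcos
    -- the weight function K and its derivative
    set K : ℝ → ℝ := fun θ => gegenbauer (lam+1) m (Real.cos θ) * (Real.sin θ)^d with hKdef
    set Kd : ℝ → ℝ := fun θ => gegDeriv (lam+1) m (Real.cos θ) * (-Real.sin θ) * (Real.sin θ)^d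
        + gegenbauer (lam+1) m (Real.cos θ) * ((d:ℝ) * (Real.sin θ)^(d-1) * Real.cos θ) with hKddef
    have hsinpow : ∀ θ, HasDerivAt (fun θ => (Real.sin θ)^d)
        ((d:ℝ) * (Real.sin θ)^(d-1) * Real.cos θ) θ := by
      intro θ
      exact ((Real.hasDerivAt_sin θ).pow d).congr_deriv (by ring)
    have hKderiv : ∀ θ, HasDerivAt K (Kd θ) θ := by
      intro θ
      have h1 : HasDerivAt (fun θ => gegenbauer (lam+1) m (Real.cos θ))
          (gegDeriv (lam+1) m (Real.cos θ) * (-Real.sin θ)) θ :=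
        (hasDerivAt_geg (lam+1) m (Real.cos θ)).comp θ (Real.hasDerivAt_cos θ)
      exact h1.mul (hsinpow θ)
    have hKc : Continuous K :=
      ((cont_geg (lam+1) m).comp Real.continuous_cos).mul (Real.continuous_sin.pow d)
    have hKdc : Continuous Kd := by
      apply Continuous.add
      · exact (((cont_gegDeriv (lam+1) m).comp Real.continuous_cos).mul
          Real.continuous_sin.neg).mul (Real.continuous_sin.pow d)
      · exact ((cont_geg (lam+1) m).comp Real.continuous_cos).mul
          ((continuous_const.mul (Real.continuous_sin.pow (d-1))).mul Real.continuous_cos)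
    have hK0 : K 0 = 0 := by simp [hKdef, Real.sin_zero, zero_pow hdne]
    have hKpi : K π = 0 := by simp [hKdef, Real.sin_pi, zero_pow hdne]
    -- Step A : ∫ H(cosθ) sinθ K θ = ∫ g(cosθ) Kd θ
    have hintH : IntervalIntegrable (fun θ => H (Real.cos θ) * (-Real.sin θ) * K θ)
        MeasureTheory.volume 0 π :=
      ((hHcosc.mul Real.continuous_sin.neg).mul hKc).intervalIntegrable 0 π
    have hintg : IntervalIntegrable (fun θ => g (Real.cos θ) * Kd θ)
        MeasureTheory.volume 0 π := (hgcosc.mul hKdc).intervalIntegrable 0 π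
    have hFTC : (∫ θ in (0:ℝ)..π, (H (Real.cos θ) * (-Real.sin θ) * K θ + g (Real.cos θ) * Kd θ))
        = 0 := by
      have hder : ∀ θ ∈ Set.uIcc (0:ℝ) π, HasDerivAt (fun θ => g (Real.cos θ) * K θ)
          (H (Real.cos θ) * (-Real.sin θ) * K θ + g (Real.cos θ) * Kd θ) θ := by
        intro θ _
        have h1 : HasDerivAt (fun θ => g (Real.cos θ)) (H (Real.cos θ) * (-Real.sin θ)) θ :=
          (hgderiv _ (hcos θ)).comp θ (Real.hasDerivAt_cos θ)
        exact h1.mul (hKderiv θ)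
      rw [intervalIntegral.integral_eq_sub_of_hasDerivAt hder (hintH.add hintg)]
      rw [hKpi, hK0]
      ring
    have hstepA : (∫ θ in (0:ℝ)..π, H (Real.cos θ) * Real.sin θ * K θ)
        = ∫ θ in (0:ℝ)..π, g (Real.cos θ) * Kd θ := by
      have hsplit := intervalIntegral.integral_add hintH hintg
      rw [hsplit] at hFTC
      have hneg : (∫ θ in (0:ℝ)..π, H (Real.cos θ) * (-Real.sin θ) * K θ)
          = - ∫ θ in (0:ℝ)..π, H (Real.cos θ) * Real.sin θ * K θ := by
        rw [← intervalIntegral.integral_neg]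
        apply intervalIntegral.integral_congr
        intro θ _; ring
      rw [hneg] at hFTC
      linarith
    -- swap on the H side
    set W1 : ℝ → ℝ := fun θ => gegenbauer (lam+1) m (Real.cos θ) * (Real.sin θ)^(d+1) with hW1def
    have hW1c : Continuous W1 :=
      ((cont_geg (lam+1) m).comp Real.continuous_cos).mul (Real.continuous_sin.pow (d+1))
    have hHside : (∫ θ in (0:ℝ)..π, H (Real.cos θ) * Real.sin θ * K θ)
        = ∑' n, h n t * ∫ θ in (0:ℝ)..π, gegenbauer (lam+1) n (Real.cos θ) * W1 θ := by
      rw [← swap_tsum_integral (lam+1) (fun n => h n t) _ hMh hbh W1 hW1c]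
      apply intervalIntegral.integral_congr
      intro θ _
      simp only [hHdef, hKdef, hW1def]
      ring
    -- orthogonality values
    set Imm : ℝ := ∫ θ in (0:ℝ)..π, gegenbauer (lam+1) m (Real.cos θ)
        * gegenbauer (lam+1) m (Real.cos θ) * (Real.sin θ)^(d+1) with hImmdef
    have hJval : ∀ n : ℕ, (∫ θ in (0:ℝ)..π, gegenbauer (lam+1) n (Real.cos θ) * W1 θ)
        = ∫ θ in (0:ℝ)..π, gegenbauer (lam+1) n (Real.cos θ)
          * gegenbauer (lam+1) m (Real.cos θ) * (Real.sin θ)^(d+1) := by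
      intro n
      apply intervalIntegral.integral_congr
      intro θ _
      simp only [hW1def]
      ring
    have hHval : (∫ θ in (0:ℝ)..π, H (Real.cos θ) * Real.sin θ * K θ) = h m t * Imm := by
      rw [hHside]
      rw [tsum_eq_single m]
      · rw [hJval m]
      · intro n hn
        rw [hJval n, geg_orth (lam+1) (d+1) he hn, mul_zero]
    -- swap on the f side
    have hgside : (∫ θ in (0:ℝ)..π, g (Real.cos θ) * Kd θ)
        = ∑' n, f n t * ∫ θ in (0:ℝ)..π, gegenbauer lam n (Real.cos θ) * Kd θ := by
      rw [← swap_tsum_integral lam (fun n => f n t) _ hsum hbf Kd hKdc]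
    -- value of the f-side integrals
    have hBval : ∀ n : ℕ, (∫ θ in (0:ℝ)..π, gegenbauer lam n (Real.cos θ) * Kd θ)
        = ∫ θ in (0:ℝ)..π, gegDeriv lam n (Real.cos θ) * Real.sin θ * K θ := by
      intro n
      have hder : ∀ θ ∈ Set.uIcc (0:ℝ) π, HasDerivAt (fun θ => gegenbauer lam n (Real.cos θ) * K θ)
          (gegDeriv lam n (Real.cos θ) * (-Real.sin θ) * K θ
            + gegenbauer lam n (Real.cos θ) * Kd θ) θ := by
        intro θ _
        have h1 : HasDerivAt (fun θ => gegenbauer lam n (Real.cos θ))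
            (gegDeriv lam n (Real.cos θ) * (-Real.sin θ)) θ :=
          (hasDerivAt_geg lam n (Real.cos θ)).comp θ (Real.hasDerivAt_cos θ)
        exact h1.mul (hKderiv θ)
      have hint1 : IntervalIntegrable (fun θ => gegDeriv lam n (Real.cos θ) * (-Real.sin θ) * K θ)
          MeasureTheory.volume 0 π :=
        ((((cont_gegDeriv lam n).comp Real.continuous_cos).mul
          Real.continuous_sin.neg).mul hKc).intervalIntegrable 0 π
      have hint2 : IntervalIntegrable (fun θ => gegenbauer lam n (Real.cos θ) * Kd θ)
          MeasureTheory.volume 0 π :=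
        ((((cont_geg lam n).comp Real.continuous_cos)).mul hKdc).intervalIntegrable 0 π
      have hFTC2 := intervalIntegral.integral_eq_sub_of_hasDerivAt hder (hint1.add hint2)
      rw [hKpi, hK0, mul_zero, mul_zero, sub_zero] at hFTC2
      rw [intervalIntegral.integral_add hint1 hint2] at hFTC2
      have hneg2 : (∫ θ in (0:ℝ)..π, gegDeriv lam n (Real.cos θ) * (-Real.sin θ) * K θ)
          = - ∫ θ in (0:ℝ)..π, gegDeriv lam n (Real.cos θ) * Real.sin θ * K θ := by
        rw [← intervalIntegral.integral_neg]
        apply intervalIntegral.integral_congr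
        intro θ _; ring
      rw [hneg2] at hFTC2
      linarith
    have hB0 : (∫ θ in (0:ℝ)..π, gegDeriv lam 0 (Real.cos θ) * Real.sin θ * K θ) = 0 := by
      have : ∀ θ, gegDeriv lam 0 (Real.cos θ) * Real.sin θ * K θ = 0 := by
        intro θ; simp [gegDeriv]
      simp only [this, intervalIntegral.integral_zero]
    have hBsucc : ∀ p : ℕ, (∫ θ in (0:ℝ)..π, gegDeriv lam (p+1) (Real.cos θ) * Real.sin θ * K θ)
        = 2 * lam * ∫ θ in (0:ℝ)..π, gegenbauer (lam+1) p (Real.cos θ)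
          * gegenbauer (lam+1) m (Real.cos θ) * (Real.sin θ)^(d+1) := by
      intro p
      rw [← intervalIntegral.integral_const_mul]
      apply intervalIntegral.integral_congr
      intro θ _
      show (2 * lam * gegenbauer (lam+1) p (Real.cos θ)) * Real.sin θ * K θ = _
      simp only [hKdef]
      ring
    have hgval : (∫ θ in (0:ℝ)..π, g (Real.cos θ) * Kd θ) = f (m+1) t * (2 * lam * Imm) := by
      rw [hgside]
      rw [tsum_eq_single (m+1)]
      · rw [hBval (m+1), hBsucc m]
      · intro n hn
        match n with
        | 0 => rw [hBval 0, hB0, mul_zero]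
        | (p+1) =>
          have hpm : p ≠ m := by omega
          rw [hBval (p+1), hBsucc p, geg_orth (lam+1) (d+1) he hpm, mul_zero, mul_zero]
    -- conclude
    have hImmpos : 0 < Imm := geg_norm_pos (lam+1) hmu_half (d+1) m
    have hfinal : h m t * Imm = f (m+1) t * (2 * lam * Imm) := by
      rw [← hHval, ← hgval, hstepA]
    have : h m t = 2 * lam * f (m+1) t := by
      have h2 : (h m t - 2 * lam * f (m+1) t) * Imm = 0 := by linarith [hfinal]
      rcases mul_eq_zero.mp h2 with h3 | h3
      · linarith
      · exact absurd h3 (ne_of_gt hImmpos)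
    rw [this, hlam]
    ring
  constructor
  · intro n hn t ht
    have := key1 (n-1) t ht
    rwa [Nat.sub_add_cancel hn] at this
  · have hc2 : (((d+2:ℕ):ℝ) - 1)/2 = lam+1 := by push_cast; rw [hlam]; ring
    refine ⟨fun n t => ((d:ℝ)-1) * f (n+1) t, ?_, ?_, ?_⟩
    · intro n
      constructor
      · exact continuousOn_const.mul (hpd (n+1)).1
      · intro N x a
        have hbase := (hpd (n+1)).2 N x a
        have heq : ∀ i j : Fin N, a i * (((d:ℝ)-1) * f (n+1) (dist (x i) (x j))) * a j
            = ((d:ℝ)-1) * (a i * f (n+1) (dist (x i) (x j)) * a j) := by intros; ring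
        calc (0:ℝ) ≤ ((d:ℝ)-1) * ∑ i, ∑ j, a i * f (n+1) (dist (x i) (x j)) * a j :=
              mul_nonneg (by linarith) hbase
          _ = ∑ i, ∑ j, a i * (((d:ℝ)-1) * f (n+1) (dist (x i) (x j))) * a j := by
              rw [Finset.mul_sum]
              apply Finset.sum_congr rfl
              intro i _
              rw [Finset.mul_sum]
              apply Finset.sum_congr rfl
              intro j _
              rw [heq]
    · simp only [hc2]
      have habs : Summable (fun n => |h n 0 * gegenbauer (lam+1) n 1|) := by
        simpa [abs_mul] using hsumh 0 le_rfl
      have hS : Summable (fun n => h n 0 * gegenbauer (lam+1) n 1) := habs.of_abs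
      apply hS.congr
      intro n
      rw [key1 n 0 le_rfl]
    · intro x hx t ht
      simp only [hc2]
      rw [(hderiv x hx t ht).deriv]
      apply tsum_congr
      intro n
      rw [key1 n t ht]
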